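/- For a dynamical system (X,f) with X compact metric: (X,f) is exact (for every nonempty open U there exists n with f^n(U) = X) if and only if the induced system (2^X, f_*) is exact. -/

import Mathlib

open TopologicalSpace Metric

/-- `(X,f)` is exact (every nonempty open set has some forward iterate equal to all of `X`)
if and only if the induced system `(2^X, f_*)` is exact. -/
theorem stmt_19 (X : Type*) [MetricSpace X] [CompactSpace X] (f : X → X) (hf : Continuous f)
    (F : NonemptyCompacts X → NonemptyCompacts X)
    (hF : ∀ A : NonemptyCompacts X, (F A : Set X) = f '' (A : Set X)) :
    (∀ U : Set X, IsOpen U → U.Nonempty → ∃ n : ℕ, f^[n] '' U = Set.univ) ↔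
    (∀ U : Set (NonemptyCompacts X), IsOpen U → U.Nonempty →
      ∃ n : ℕ, F^[n] '' U = Set.univ) := by
  have hiter : ∀ (n : ℕ) (A : NonemptyCompacts X),
      ((F^[n] A : NonemptyCompacts X) : Set X) = f^[n] '' (A : Set X) := by
    intro n
    induction n with
    | zero => intro A; simp
    | succ n ih =>
      intro A
      rw [Function.iterate_succ_apply', hF, ih, ← Set.image_comp,
        ← Function.iterate_succ']
  constructor
  · -- forward direction
    intro hex 𝒰 hopen h𝒰ne
    obtain ⟨A, hA⟩ := h𝒰ne
    -- f is surjective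
    have hsurj : Function.Surjective f := by
      by_cases hs : ∃ a b : X, a ≠ b
      · obtain ⟨a, b, hab⟩ := hs
        have hd : 0 < dist a b := dist_pos.2 hab
        obtain ⟨n, hn⟩ := hex (ball a (dist a b / 2)) isOpen_ball
          ⟨a, mem_ball_self (by linarith)⟩
        have hbne : b ∉ ball a (dist a b / 2) := by
          simp only [mem_ball, dist_comm b a]
          linarith
        match n, hn with
        | 0, hn =>
          simp only [Function.iterate_zero, Set.image_id] at hn
          exact absurd (hn ▸ Set.mem_univ b) hbne
        | n+1, hn =>
          intro y
          obtain ⟨z, _, hz⟩ : y ∈ f^[n+1] '' ball a (dist a b / 2) :=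
            hn ▸ Set.mem_univ y
          rw [Function.iterate_succ_apply'] at hz
          exact ⟨f^[n] z, hz⟩
      · push_neg at hs
        intro y
        exact ⟨y, hs (f y) y⟩
    have hstep : ∀ (n : ℕ) (U : Set X), f^[n] '' U = Set.univ →
        f^[n+1] '' U = Set.univ := by
      intro n U h
      rw [Function.iterate_succ', Set.image_comp, h, Set.image_univ, hsurj.range_eq]
    have hge : ∀ (n : ℕ) (U : Set X), f^[n] '' U = Set.univ →
        ∀ m, n ≤ m → f^[m] '' U = Set.univ := by
      intro n U h m hm
      induction m, hm using Nat.le_induction with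
      | base => exact h
      | succ m _ ih => exact hstep m U ih
    obtain ⟨ε, hε, hball⟩ := Metric.isOpen_iff.1 hopen A hA
    have hε3 : (0:ℝ) < ε / 3 := by linarith
    obtain ⟨t, hts, htfin, htcov⟩ := A.isCompact.finite_cover_balls hε3
    have hchoice : ∀ x ∈ t, ∃ n, f^[n] '' ball x (ε/3) = Set.univ := fun x _ =>
      hex _ isOpen_ball ⟨x, mem_ball_self hε3⟩
    choose! nfun hnfun using hchoice
    set N := htfin.toFinset.sup nfun with hNdef
    have hN : ∀ x ∈ t, f^[N] '' ball x (ε/3) = Set.univ := fun x hx =>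
      hge _ _ (hnfun x hx) N (Finset.le_sup (htfin.mem_toFinset.2 hx))
    refine ⟨N, Set.eq_univ_iff_forall.2 fun K => ?_⟩
    -- construct preimage compact set B
    set B : Set X := f^[N] ⁻¹' (K : Set X) ∩ ⋃ x ∈ t, closedBall x (ε/3) with hBdef
    have hfN : Continuous (f^[N]) := hf.iterate N
    have hBclosed : IsClosed B :=
      (K.isCompact.isClosed.preimage hfN).inter
        (htfin.isClosed_biUnion fun _ _ => isClosed_closedBall)
    have hBcomp : IsCompact B := hBclosed.isCompact
    -- membership helper
    have hmem : ∀ x ∈ t, ∀ y ∈ (K : Set X), ∃ z ∈ B, dist z x ≤ ε/3 ∧ f^[N] z = y := by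
      intro x hx y hy
      obtain ⟨z, hz, hfz⟩ : y ∈ f^[N] '' ball x (ε/3) := (hN x hx) ▸ Set.mem_univ y
      refine ⟨z, ⟨by simpa [hfz] using hy, Set.mem_biUnion hx (ball_subset_closedBall hz)⟩,
        le_of_lt hz, hfz⟩
    obtain ⟨y₀, hy₀⟩ := K.nonempty
    obtain ⟨a₀, ha₀⟩ := A.nonempty
    obtain ⟨x₀, hx₀t, _⟩ : ∃ x ∈ t, a₀ ∈ ball x (ε/3) := by
      simpa using htcov ha₀
    obtain ⟨z₀, hz₀B, _, _⟩ := hmem x₀ hx₀t y₀ hy₀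
    have hBne : B.Nonempty := ⟨z₀, hz₀B⟩
    set B' : NonemptyCompacts X := ⟨⟨B, hBcomp⟩, hBne⟩ with hB'def
    have hBK : f^[N] '' B = (K : Set X) := by
      apply Set.Subset.antisymm
      · rintro y ⟨z, hz, rfl⟩
        exact hz.1
      · intro y hy
        obtain ⟨z, hzB, _, hfz⟩ := hmem x₀ hx₀t y hy
        exact ⟨z, hzB, hfz⟩
    have hdist : dist B' A < ε := by
      rw [NonemptyCompacts.dist_eq]
      have h1 : ∀ b ∈ B, ∃ a ∈ (A : Set X), dist b a ≤ 2*ε/3 := by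
        intro b hb
        obtain ⟨x, hxt, hbx⟩ : ∃ x ∈ t, b ∈ closedBall x (ε/3) := by
          simpa using hb.2
        exact ⟨x, hts hxt, by rw [mem_closedBall] at hbx; linarith⟩
      have h2 : ∀ a ∈ (A : Set X), ∃ b ∈ B, dist a b ≤ 2*ε/3 := by
        intro a ha
        obtain ⟨x, hxt, hax⟩ : ∃ x ∈ t, a ∈ ball x (ε/3) := by
          simpa using htcov ha
        obtain ⟨z, hzB, hzx, _⟩ := hmem x hxt y₀ hy₀
        refine ⟨z, hzB, ?_⟩
        have := dist_triangle a x z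
        rw [mem_ball] at hax
        rw [dist_comm z x] at hzx
        linarith
      calc hausdorffDist (B' : Set X) (A : Set X)
          ≤ 2*ε/3 := hausdorffDist_le_of_mem_dist (by linarith) h1 h2
        _ < ε := by linarith
    have hB'𝒰 : B' ∈ 𝒰 := hball hdist
    refine ⟨B', hB'𝒰, ?_⟩
    have : ((F^[N] B' : NonemptyCompacts X) : Set X) = (K : Set X) := by
      rw [hiter N B']
      exact hBK
    exact NonemptyCompacts.ext this
  · -- backward direction
    intro hex U hU hUne
    obtain ⟨x, hx⟩ := hUne
    obtain ⟨r, hr, hball⟩ := Metric.isOpen_iff.1 hU x hx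
    set S : NonemptyCompacts X := ⟨⟨{x}, isCompact_singleton⟩, ⟨x, rfl⟩⟩ with hSdef
    obtain ⟨n, hn⟩ := hex (Metric.ball S r) isOpen_ball ⟨S, mem_ball_self hr⟩
    set T : NonemptyCompacts X := ⟨⟨Set.univ, isCompact_univ⟩, ⟨x, trivial⟩⟩ with hTdef
    obtain ⟨A, hAmem, hAT⟩ : T ∈ F^[n] '' Metric.ball S r := hn ▸ Set.mem_univ T
    have hAuniv : f^[n] '' (A : Set X) = Set.univ := by
      rw [← hiter n A, hAT]
      rfl
    have hAU : (A : Set X) ⊆ U := by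
      intro a ha
      have hfin : EMetric.hausdorffEdist (A : Set X) ({x} : Set X) ≠ ⊤ :=
        hausdorffEdist_ne_top_of_nonempty_of_bounded A.nonempty ⟨x, rfl⟩
          A.isCompact.isBounded Bornology.isBounded_singleton
      have hd : hausdorffDist (A : Set X) ({x} : Set X) < r := by
        rw [mem_ball, NonemptyCompacts.dist_eq] at hAmem
        exact hAmem
      obtain ⟨y, hy, hdy⟩ := exists_dist_lt_of_hausdorffDist_lt ha hd hfin
      rw [Set.mem_singleton_iff] at hy
      subst hy
      exact hball hdy
    refine ⟨n, Set.eq_univ_of_univ_subset ?_⟩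
    rw [← hAuniv]
    exact Set.image_mono hAU
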